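/- arXiv:0911.3978 — 8 statements merged into one kernel-verified Lean document; each statement's English description precedes it below -/
import Mathlib

section
/- Let V be a two-dimensional real inner product space, let e ∈ V be a unit vector, and let α, β, γ, δ be real numbers. For u ∈ V write u₀ = ⟨u,e⟩e and u₁ = u − u₀, and similarly w₀, w₁ for w ∈ V. Then the inequality α‖u₀‖²‖w₀‖² + β‖u₀‖²‖w₁‖² + γ‖u₁‖²‖w₀‖² + δ‖u₁‖²‖w₁‖² ≤ 0 holds for all u, w ∈ V with ⟨u,w⟩ = 0 if and only if β ≤ 0, γ ≤ 0, and α + δ ≤ 2√(βγ). -/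
open RealInnerProductSpace

private theorem key_mtw (α β γ δ : ℝ) :
    (∀ a b c d : ℝ, a*c + b*d = 0 →
      α*a^2*c^2 + β*a^2*d^2 + γ*b^2*c^2 + δ*b^2*d^2 ≤ 0) ↔
    (β ≤ 0 ∧ γ ≤ 0 ∧ α + δ ≤ 2 * Real.sqrt (β * γ)) := by
  constructor
  · intro H
    have hβ : β ≤ 0 := by have := H 1 0 0 1 (by ring); nlinarith
    have hγ : γ ≤ 0 := by have := H 0 1 1 0 (by ring); nlinarith
    refine ⟨hβ, hγ, ?_⟩
    set B := Real.sqrt (-β) with hB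
    set G := Real.sqrt (-γ) with hG
    have hB2 : B^2 = -β := Real.sq_sqrt (by linarith)
    have hG2 : G^2 = -γ := Real.sq_sqrt (by linarith)
    have hBnn : 0 ≤ B := Real.sqrt_nonneg _
    have hGnn : 0 ≤ G := Real.sqrt_nonneg _
    have hsq : Real.sqrt (β * γ) = B * G := by
      rw [show β * γ = (B*G)^2 by rw [mul_pow, hB2, hG2]; ring]
      exact Real.sqrt_sq (mul_nonneg hBnn hGnn)
    rw [hsq]
    by_contra hc
    push_neg at hc
    have hS : 0 < α + δ := lt_of_le_of_lt (by positivity) hc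
    rcases eq_or_lt_of_le hBnn with hB0 | hBpos
    · have hβ0 : β = 0 := by nlinarith
      have := H (Real.sqrt ((G^2+1)/(α+δ))) 1 (-1) (Real.sqrt ((G^2+1)/(α+δ))) (by ring)
      have hx : (Real.sqrt ((G^2+1)/(α+δ)))^2 = (G^2+1)/(α+δ) :=
        Real.sq_sqrt (by positivity)
      rw [hβ0] at this
      have hxx : (α+δ) * ((G^2+1)/(α+δ)) = G^2+1 := by field_simp
      nlinarith [this, hx, sq_nonneg (Real.sqrt ((G^2+1)/(α+δ)))]
    · rcases eq_or_lt_of_le hGnn with hG0 | hGpos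
      · have hγ0 : γ = 0 := by nlinarith
        have := H 1 (Real.sqrt ((B^2+1)/(α+δ))) (-(Real.sqrt ((B^2+1)/(α+δ)))) 1 (by ring)
        have hx : (Real.sqrt ((B^2+1)/(α+δ)))^2 = (B^2+1)/(α+δ) :=
          Real.sq_sqrt (by positivity)
        rw [hγ0] at this
        have hxx : (α+δ) * ((B^2+1)/(α+δ)) = B^2+1 := by field_simp
        nlinarith [this, hx, sq_nonneg (Real.sqrt ((B^2+1)/(α+δ)))]
      · have := H (Real.sqrt G) (Real.sqrt B) (-(Real.sqrt B)) (Real.sqrt G) (by ring)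
        have ha : (Real.sqrt G)^2 = G := Real.sq_sqrt hGnn
        have hb : (Real.sqrt B)^2 = B := Real.sq_sqrt hBnn
        simp only [neg_sq] at this
        rw [ha, hb] at this
        nlinarith [this, mul_pos hBpos hGpos,
          mul_lt_mul_of_pos_right hc (mul_pos hBpos hGpos)]
  · rintro ⟨hβ, hγ, hS⟩ a b c d h
    set B := Real.sqrt (-β) with hB
    set G := Real.sqrt (-γ) with hG
    have hB2 : B^2 = -β := Real.sq_sqrt (by linarith)
    have hG2 : G^2 = -γ := Real.sq_sqrt (by linarith)
    have hBnn : 0 ≤ B := Real.sqrt_nonneg _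
    have hGnn : 0 ≤ G := Real.sqrt_nonneg _
    have hsq : Real.sqrt (β * γ) = B * G := by
      rw [show β * γ = (B*G)^2 by rw [mul_pow, hB2, hG2]; ring]
      exact Real.sqrt_sq (mul_nonneg hBnn hGnn)
    rw [hsq] at hS
    have hac : a*c = -(b*d) := by linarith
    have h2 : (a*c)^2 = -(a*b*c*d) := by rw [sq]; nth_rewrite 1 [hac]; ring
    have hb' : β = -B^2 := by linarith
    have hg' : γ = -G^2 := by linarith
    have e1 : β*a^2*d^2 = -(B^2*(a*d)^2) := by rw [hb']; ring
    have e2 : γ*b^2*c^2 = -(G^2*(b*c)^2) := by rw [hg']; ring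
    have h3 : δ*b^2*d^2 = δ*(a*c)^2 := by
      rw [show δ*b^2*d^2 = δ*(b*d)^2 by ring, hac]; ring
    have h2' : 2*(B*G)*(a*c)^2 = -(2*(B*G)*(a*b*c*d)) := by rw [h2]; ring
    nlinarith [sq_nonneg (B*(a*d) + G*(b*c)), h2', e1, e2, h3,
      mul_le_mul_of_nonneg_right hS (sq_nonneg (a*c))]

/-- Two-dimensional criterion for the weak Ma-Trudinger-Wang condition:
the quadratic-form inequality in the projections onto a unit vector `e`
holds for all orthogonal pairs `u, w` iff `β ≤ 0`, `γ ≤ 0` and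
`α + δ ≤ 2√(βγ)`. -/
theorem stmt_0 {V : Type*} [NormedAddCommGroup V] [InnerProductSpace ℝ V]
    (hdim : Module.finrank ℝ V = 2) (e : V) (he : ‖e‖ = 1) (α β γ δ : ℝ) :
    (∀ u w : V, ⟪u, w⟫ = 0 →
        α * ‖⟪u, e⟫ • e‖ ^ 2 * ‖⟪w, e⟫ • e‖ ^ 2 +
        β * ‖⟪u, e⟫ • e‖ ^ 2 * ‖w - ⟪w, e⟫ • e‖ ^ 2 +
        γ * ‖u - ⟪u, e⟫ • e‖ ^ 2 * ‖⟪w, e⟫ • e‖ ^ 2 +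
        δ * ‖u - ⟪u, e⟫ • e‖ ^ 2 * ‖w - ⟪w, e⟫ • e‖ ^ 2 ≤ 0) ↔
      (β ≤ 0 ∧ γ ≤ 0 ∧ α + δ ≤ 2 * Real.sqrt (β * γ)) := by
  have he0 : e ≠ 0 := by
    intro h; rw [h, norm_zero] at he; norm_num at he
  have : FiniteDimensional ℝ V := FiniteDimensional.of_finrank_eq_succ (n := 1) hdim
  set K : Submodule ℝ V := (ℝ ∙ e)ᗮ with hKdef
  have hK : Module.finrank ℝ K = 1 :=
    Submodule.finrank_add_finrank_orthogonal' (K := ℝ ∙ e)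
      (by rw [finrank_span_singleton he0, hdim])
  have : Nontrivial K := by
    have h1 : 0 < Module.finrank ℝ K := by omega
    exact Module.nontrivial_of_finrank_pos h1
  obtain ⟨f', hf'⟩ := exists_ne (0 : K)
  have hnf' : ‖(f' : V)‖ ≠ 0 := by
    simpa [norm_eq_zero, Submodule.coe_eq_zero] using hf'
  set fK : K := ‖(f' : V)‖⁻¹ • f' with hfKdef
  set f : V := (fK : V) with hfdef
  have hf1 : ‖f‖ = 1 := by
    rw [hfdef, hfKdef]
    push_cast
    rw [norm_smul, norm_inv, norm_norm, inv_mul_cancel₀ hnf']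
  have hfK0 : fK ≠ 0 := smul_ne_zero (inv_ne_zero hnf') hf'
  have hef : ⟪e, f⟫ = 0 :=
    Submodule.mem_orthogonal_singleton_iff_inner_right.mp fK.2
  have hfe : ⟪f, e⟫ = 0 := by rw [real_inner_comm]; exact hef
  have hee : ⟪e, e⟫ = 1 := by
    rw [real_inner_self_eq_norm_sq, he]; norm_num
  have hff : ⟪f, f⟫ = 1 := by
    rw [real_inner_self_eq_norm_sq, hf1]; norm_num
  -- every element of K is a multiple of fK
  have hone : ∀ v : K, ∃ c : ℝ, c • fK = v := by
    have := (finrank_eq_one_iff_of_nonzero' (K := ℝ) fK hfK0).mp hK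
    exact this
  have hdec : ∀ v : V, ∃ b : ℝ, v - ⟪v, e⟫ • e = b • f := by
    intro v
    have hv1 : v - ⟪v, e⟫ • e ∈ K := by
      rw [hKdef, Submodule.mem_orthogonal_singleton_iff_inner_right]
      rw [inner_sub_right, real_inner_smul_right, hee]
      rw [real_inner_comm e v]; ring
    obtain ⟨c, hc⟩ := hone ⟨_, hv1⟩
    refine ⟨c, ?_⟩
    have := congrArg (Subtype.val) hc
    simpa [hfdef] using this.symm
  -- norms
  have hns : ∀ (r : ℝ) (v : V), ‖v‖ = 1 → ‖r • v‖ ^ 2 = r ^ 2 := by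
    intro r v hv
    rw [norm_smul, hv, Real.norm_eq_abs, mul_one, sq_abs]
  have hinner : ∀ a b c d : ℝ, ⟪a • e + b • f, c • e + d • f⟫ = a * c + b * d := by
    intro a b c d
    rw [inner_add_left, inner_add_right, inner_add_right,
      real_inner_smul_left, real_inner_smul_left, real_inner_smul_left,
      real_inner_smul_left, real_inner_smul_right, real_inner_smul_right,
      real_inner_smul_right, real_inner_smul_right, hee, hff, hef, hfe]
    ring
  have hcoord : ∀ a b c d : ℝ, ⟪a • e + b • f, e⟫ = a := by
    intro a b c d
    rw [inner_add_left, real_inner_smul_left, real_inner_smul_left, hee, hfe]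
    ring
  refine Iff.trans ?_ (key_mtw α β γ δ)
  constructor
  · intro H a b c d habcd
    set u : V := a • e + b • f with hu
    set w : V := c • e + d • f with hw
    have hue : ⟪u, e⟫ = a := hcoord a b c d
    have hwe : ⟪w, e⟫ = c := hcoord c d 0 0
    have hu1 : u - ⟪u, e⟫ • e = b • f := by rw [hue, hu]; abel
    have hw1 : w - ⟪w, e⟫ • e = d • f := by rw [hwe, hw]; abel
    have huw : ⟪u, w⟫ = 0 := by rw [hu, hw, hinner]; linarith
    have := H u w huw
    rw [hu1, hw1, hue, hwe, hns a e he, hns c e he, hns b f hf1, hns d f hf1] at this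
    linarith [this]
  · intro H u w huw
    obtain ⟨b, hb⟩ := hdec u
    obtain ⟨d, hd⟩ := hdec w
    set a : ℝ := ⟪u, e⟫ with ha
    set c : ℝ := ⟪w, e⟫ with hc
    have hu : u = a • e + b • f := by rw [← hb]; abel
    have hw : w = c • e + d • f := by rw [← hd]; abel
    have habcd : a * c + b * d = 0 := by rw [← hinner a b c d, ← hu, ← hw]; exact huw
    have := H a b c d habcd
    rw [hb, hd, hns a e he, hns c e he, hns b f hf1, hns d f hf1]
    linarith [this]
end

section
/- Let V be a two-dimensional real inner product space, let e ∈ V be a unit vector, and let α, β, γ, δ be real numbers. For u ∈ V write u₀ = ⟨u,e⟩e and u₁ = u − u₀, and similarly w₀, w₁ for w ∈ V. Then the strict inequality α‖u₀‖²‖w₀‖² + β‖u₀‖²‖w₁‖² + γ‖u₁‖²‖w₀‖² + δ‖u₁‖²‖w₁‖² < 0 holds for all nonzero u, w ∈ V with ⟨u,w⟩ = 0 if and only if β < 0, γ < 0, and α + δ < 2√(βγ). -/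
lemma key2 (x p q s t : ℝ) (hp : 0 < p) (hq : 0 < q) (hs : 0 ≤ s) (ht : 0 ≤ t)
    (hnz : ¬(s = 0 ∧ t = 0)) (hx : x < 2 * (p * q)) :
    x * (s * t) - p ^ 2 * s ^ 2 - q ^ 2 * t ^ 2 < 0 := by
  rcases hs.eq_or_lt' with hs0 | hs0
  · have ht' : 0 < t := ht.lt_of_ne fun h => hnz ⟨hs0, h.symm⟩
    rw [hs0]
    nlinarith [mul_pos (pow_pos hq 2) (pow_pos ht' 2)]
  · rcases ht.eq_or_lt' with ht0 | ht0
    · rw [ht0]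
      nlinarith [mul_pos (pow_pos hp 2) (pow_pos hs0 2)]
    · nlinarith [sq_nonneg (p * s - q * t), mul_pos (mul_pos hs0 ht0) (sub_pos.mpr hx)]

lemma key_scalar (α β γ δ A B C D : ℝ) (hA : 0 ≤ A) (hB : 0 ≤ B) (hC : 0 ≤ C) (hD : 0 ≤ D)
    (hAB : 0 < A + B) (hCD : 0 < C + D) (hACBD : A * C = B * D)
    (hβ : β < 0) (hγ : γ < 0) (h : α + δ < 2 * Real.sqrt (β * γ)) :
    α * A * C + β * A * D + γ * B * C + δ * B * D < 0 := by
  have hp2 : Real.sqrt (-β) ^ 2 = -β := Real.sq_sqrt (by linarith)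
  have hq2 : Real.sqrt (-γ) ^ 2 = -γ := Real.sq_sqrt (by linarith)
  have hp0 : 0 < Real.sqrt (-β) := Real.sqrt_pos.mpr (by linarith)
  have hq0 : 0 < Real.sqrt (-γ) := Real.sqrt_pos.mpr (by linarith)
  have hpq : Real.sqrt (β * γ) = Real.sqrt (-β) * Real.sqrt (-γ) := by
    rw [← Real.sqrt_mul (by linarith)]; ring_nf
  rw [hpq] at h
  set p := Real.sqrt (-β)
  set q := Real.sqrt (-γ)
  have hs2 : Real.sqrt (A * D) ^ 2 = A * D := Real.sq_sqrt (by positivity)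
  have ht2 : Real.sqrt (B * C) ^ 2 = B * C := Real.sq_sqrt (by positivity)
  have hst : Real.sqrt (A * D) * Real.sqrt (B * C) = A * C := by
    rw [← Real.sqrt_mul (by positivity)]
    have : A * D * (B * C) = (A * C) ^ 2 := by linear_combination (-(A * C)) * hACBD
    rw [this, Real.sqrt_sq (by positivity)]
  set s := Real.sqrt (A * D) with hsdef
  set t := Real.sqrt (B * C) with htdef
  have hs0 : 0 ≤ s := Real.sqrt_nonneg _
  have ht0 : 0 ≤ t := Real.sqrt_nonneg _
  have hnz : ¬(s = 0 ∧ t = 0) := by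
    rintro ⟨h1, h2⟩
    have hAD : A * D = 0 := by rw [← hs2, h1]; ring
    have hBC : B * C = 0 := by rw [← ht2, h2]; ring
    have hAC : A * C = 0 := by rw [← hst, h1]; ring
    rcases hA.eq_or_lt' with hA0 | hA0
    · have hB0 : 0 < B := by linarith
      have hC0 : C = 0 := (mul_eq_zero.mp hBC).resolve_left (ne_of_gt hB0)
      have hD0 : 0 < D := by linarith
      nlinarith [mul_pos hB0 hD0]
    · have hC0 : C = 0 := (mul_eq_zero.mp hAC).resolve_left (ne_of_gt hA0)
      have hD0 : D = 0 := (mul_eq_zero.mp hAD).resolve_left (ne_of_gt hA0)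
      linarith
  have hE : α * A * C + β * A * D + γ * B * C + δ * B * D =
      (α + δ) * (s * t) - p ^ 2 * s ^ 2 - q ^ 2 * t ^ 2 := by
    rw [hs2, ht2, hst]
    linear_combination A * D * hp2 + B * C * hq2 - δ * hACBD
  rw [hE]
  exact key2 _ _ _ _ _ hp0 hq0 hs0 ht0 hnz h

open RealInnerProductSpace

lemma n1 {V : Type*} [NormedAddCommGroup V] [InnerProductSpace ℝ V]
    {e : V} (he : ‖e‖ = 1) (v : V) : ‖⟪v, e⟫ • e‖ ^ 2 = ⟪v, e⟫ ^ 2 := by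
  rw [norm_smul, he, mul_one, Real.norm_eq_abs, sq_abs]

lemma n2 {V : Type*} [NormedAddCommGroup V] [InnerProductSpace ℝ V]
    {e : V} (he : ‖e‖ = 1) (v : V) : ‖v - ⟪v, e⟫ • e‖ ^ 2 = ‖v‖ ^ 2 - ⟪v, e⟫ ^ 2 := by
  rw [norm_sub_sq_real, real_inner_smul_right, n1 he]
  ring

lemma dep1 {V : Type*} [NormedAddCommGroup V] [InnerProductSpace ℝ V]
    (S : Submodule ℝ V) (hS : Module.finrank ℝ S = 1) (x y : V) (hx : x ∈ S) (hy : y ∈ S) :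
    ⟪x, y⟫ ^ 2 = ‖x‖ ^ 2 * ‖y‖ ^ 2 := by
  haveI : Module.Free ℝ S := Module.Free.of_divisionRing ℝ S
  obtain ⟨v, -, hv⟩ := finrank_eq_one_iff'.mp hS
  obtain ⟨a, ha⟩ := hv ⟨x, hx⟩
  obtain ⟨b, hb⟩ := hv ⟨y, hy⟩
  have hx' : x = a • (v : V) := by
    have := congrArg (Subtype.val) ha
    simpa using this.symm
  have hy' : y = b • (v : V) := by
    have := congrArg (Subtype.val) hb
    simpa using this.symm
  rw [hx', hy', real_inner_smul_left, real_inner_smul_right, norm_smul, norm_smul,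
    real_inner_self_eq_norm_sq]
  simp only [mul_pow, Real.norm_eq_abs, sq_abs]
  ring

lemma comp_inner {V : Type*} [NormedAddCommGroup V] [InnerProductSpace ℝ V]
    {e f : V} (he : ‖e‖ = 1) (hef : ⟪e, f⟫ = 0) (a b : ℝ) :
    ⟪a • e + b • f, e⟫ = a := by
  rw [inner_add_left, real_inner_smul_left, real_inner_smul_left,
    real_inner_self_eq_norm_sq, he, real_inner_comm e f, hef]
  ring

lemma comp_norm {V : Type*} [NormedAddCommGroup V] [InnerProductSpace ℝ V]
    {e f : V} (he : ‖e‖ = 1) (hf : ‖f‖ = 1) (hef : ⟪e, f⟫ = 0) (a b : ℝ) :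
    ‖a • e + b • f‖ ^ 2 = a ^ 2 + b ^ 2 := by
  rw [norm_add_sq_real, real_inner_smul_left, real_inner_smul_right, hef,
    norm_smul, norm_smul, he, hf]
  simp [sq_abs]

lemma comp_ne_zero {V : Type*} [NormedAddCommGroup V] [InnerProductSpace ℝ V]
    {e f : V} (he : ‖e‖ = 1) (hf : ‖f‖ = 1) (hef : ⟪e, f⟫ = 0) {a b : ℝ}
    (hab : ¬(a = 0 ∧ b = 0)) : a • e + b • f ≠ 0 := by
  intro h
  have h2 : ‖a • e + b • f‖ ^ 2 = 0 := by rw [h]; simp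
  rw [comp_norm he hf hef] at h2
  exact hab ⟨by nlinarith [sq_nonneg a, sq_nonneg b], by nlinarith [sq_nonneg a, sq_nonneg b]⟩

/-- Two-dimensional criterion for the strong Ma-Trudinger-Wang condition:
the strict quadratic-form inequality in the projections onto a unit vector `e`
holds for all nonzero orthogonal pairs `u, w` iff `β < 0`, `γ < 0` and
`α + δ < 2√(βγ)`. -/
theorem stmt_1 {V : Type*} [NormedAddCommGroup V] [InnerProductSpace ℝ V]
    (hdim : Module.finrank ℝ V = 2) (e : V) (he : ‖e‖ = 1) (α β γ δ : ℝ) :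
    (∀ u w : V, u ≠ 0 → w ≠ 0 → ⟪u, w⟫ = 0 →
        α * ‖⟪u, e⟫ • e‖ ^ 2 * ‖⟪w, e⟫ • e‖ ^ 2 +
        β * ‖⟪u, e⟫ • e‖ ^ 2 * ‖w - ⟪w, e⟫ • e‖ ^ 2 +
        γ * ‖u - ⟪u, e⟫ • e‖ ^ 2 * ‖⟪w, e⟫ • e‖ ^ 2 +
        δ * ‖u - ⟪u, e⟫ • e‖ ^ 2 * ‖w - ⟪w, e⟫ • e‖ ^ 2 < 0) ↔
      (β < 0 ∧ γ < 0 ∧ α + δ < 2 * Real.sqrt (β * γ)) := by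
  haveI : FiniteDimensional ℝ V := FiniteDimensional.of_finrank_pos (by rw [hdim]; norm_num)
  have he0 : e ≠ 0 := by intro h; rw [h, norm_zero] at he; norm_num at he
  have hee : ⟪e, e⟫ = (1 : ℝ) := by rw [real_inner_self_eq_norm_sq, he]; norm_num
  have hspan : Module.finrank ℝ (ℝ ∙ e) = 1 := finrank_span_singleton he0
  have horth : Module.finrank ℝ ((ℝ ∙ e)ᗮ : Submodule ℝ V) = 1 := by
    have h2 := Submodule.finrank_add_finrank_orthogonal (K := (ℝ ∙ e : Submodule ℝ V))
    rw [hspan, hdim] at h2; omega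
  constructor
  · intro hcond
    haveI : Module.Free ℝ ((ℝ ∙ e)ᗮ : Submodule ℝ V) :=
      Module.Free.of_divisionRing ℝ _
    obtain ⟨f, hf, hef⟩ : ∃ f : V, ‖f‖ = 1 ∧ ⟪e, f⟫ = 0 := by
      obtain ⟨v, hv0, -⟩ := finrank_eq_one_iff'.mp horth
      have hv0' : (v : V) ≠ 0 := fun h => hv0 (Subtype.coe_injective (by simpa using h))
      have hev : ⟪e, (v : V)⟫ = 0 :=
        Submodule.mem_orthogonal_singleton_iff_inner_right.mp v.2
      exact ⟨‖(v : V)‖⁻¹ • (v : V), norm_smul_inv_norm hv0',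
        by rw [real_inner_smul_right, hev, mul_zero]⟩
    have hfe : ⟪f, e⟫ = 0 := (real_inner_comm e f).trans hef
    have hff : ⟪f, f⟫ = (1 : ℝ) := by rw [real_inner_self_eq_norm_sq, hf]; norm_num
    have hf0 : f ≠ 0 := by intro h; rw [h, norm_zero] at hf; norm_num at hf
    have hβ : β < 0 := by
      have h1 := hcond e f he0 hf0 hef
      rw [n1 he, n1 he, n2 he, n2 he, hee] at h1
      rw [hfe, he, hf] at h1
      norm_num at h1
      linarith
    have hγ : γ < 0 := by
      have h1 := hcond f e hf0 he0 hfe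
      rw [n1 he, n1 he, n2 he, n2 he, hee] at h1
      rw [hfe, he, hf] at h1
      norm_num at h1
      linarith
    refine ⟨hβ, hγ, ?_⟩
    set a : ℝ := Real.sqrt (Real.sqrt (-γ)) with hadef
    set b : ℝ := Real.sqrt (Real.sqrt (-β)) with hbdef
    have ha0 : 0 < a := Real.sqrt_pos.mpr (Real.sqrt_pos.mpr (by linarith))
    have hb0 : 0 < b := Real.sqrt_pos.mpr (Real.sqrt_pos.mpr (by linarith))
    have ha2 : a ^ 2 = Real.sqrt (-γ) := Real.sq_sqrt (Real.sqrt_nonneg _)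
    have hb2 : b ^ 2 = Real.sqrt (-β) := Real.sq_sqrt (Real.sqrt_nonneg _)
    have ha4 : (a ^ 2) ^ 2 = -γ := by rw [ha2]; exact Real.sq_sqrt (by linarith)
    have hb4 : (b ^ 2) ^ 2 = -β := by rw [hb2]; exact Real.sq_sqrt (by linarith)
    have hab2 : a ^ 2 * b ^ 2 = Real.sqrt (β * γ) := by
      rw [ha2, hb2, ← Real.sqrt_mul (by linarith)]
      ring_nf
    have hu0 : a • e + b • f ≠ 0 :=
      comp_ne_zero he hf hef (by rintro ⟨h1, -⟩; exact ha0.ne' h1)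
    have hw0 : (-b) • e + a • f ≠ 0 :=
      comp_ne_zero he hf hef (by rintro ⟨h1, -⟩; exact hb0.ne' (neg_eq_zero.mp h1))
    have huw : ⟪a • e + b • f, (-b) • e + a • f⟫ = 0 := by
      rw [inner_add_left, inner_add_right, inner_add_right, real_inner_smul_left,
        real_inner_smul_left, real_inner_smul_left, real_inner_smul_left,
        real_inner_smul_right, real_inner_smul_right, real_inner_smul_right,
        real_inner_smul_right, hee, hef, hfe, hff]
      ring
    have h1 := hcond _ _ hu0 hw0 huw
    rw [n1 he, n1 he, n2 he, n2 he, comp_inner he hef, comp_inner he hef,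
      comp_norm he hf hef, comp_norm he hf hef] at h1
    rw [← hab2]
    nlinarith [h1, ha4, hb4, mul_pos (pow_pos ha0 2) (pow_pos hb0 2),
      sq_nonneg (a * b), mul_pos ha0 hb0]
  · rintro ⟨hβ, hγ, hsum⟩ u w hu hw huw
    have hmemu : u - ⟪u, e⟫ • e ∈ ((ℝ ∙ e)ᗮ : Submodule ℝ V) := by
      rw [Submodule.mem_orthogonal_singleton_iff_inner_right, inner_sub_right,
        real_inner_smul_right, hee, real_inner_comm u e]
      ring
    have hmemw : w - ⟪w, e⟫ • e ∈ ((ℝ ∙ e)ᗮ : Submodule ℝ V) := by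
      rw [Submodule.mem_orthogonal_singleton_iff_inner_right, inner_sub_right,
        real_inner_smul_right, hee, real_inner_comm w e]
      ring
    have hkey := dep1 _ horth _ _ hmemu hmemw
    have hiw : ⟪u - ⟪u, e⟫ • e, w - ⟪w, e⟫ • e⟫ = -(⟪u, e⟫ * ⟪w, e⟫) := by
      rw [inner_sub_left, inner_sub_right, inner_sub_right, real_inner_smul_right,
        real_inner_smul_right, real_inner_smul_left, real_inner_smul_left, hee,
        huw, real_inner_comm w e]
      ring
    rw [hiw] at hkey
    rw [n1 he, n1 he, n2 he, n2 he]
    have hACBD : ⟪u, e⟫ ^ 2 * ⟪w, e⟫ ^ 2 = (‖u‖ ^ 2 - ⟪u, e⟫ ^ 2) * (‖w‖ ^ 2 - ⟪w, e⟫ ^ 2) := by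
      rw [← n2 he u, ← n2 he w]
      linear_combination hkey
    have hB : 0 ≤ ‖u‖ ^ 2 - ⟪u, e⟫ ^ 2 := by rw [← n2 he u]; positivity
    have hD : 0 ≤ ‖w‖ ^ 2 - ⟪w, e⟫ ^ 2 := by rw [← n2 he w]; positivity
    have hAB : 0 < ⟪u, e⟫ ^ 2 + (‖u‖ ^ 2 - ⟪u, e⟫ ^ 2) := by
      have : 0 < ‖u‖ := norm_pos_iff.mpr hu
      nlinarith
    have hCD : 0 < ⟪w, e⟫ ^ 2 + (‖w‖ ^ 2 - ⟪w, e⟫ ^ 2) := by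
      have : 0 < ‖w‖ := norm_pos_iff.mpr hw
      nlinarith
    exact key_scalar α β γ δ _ _ _ _ (sq_nonneg _) hB (sq_nonneg _) hD hAB hCD hACBD hβ hγ hsum
end

section
/- Let V be a finite-dimensional real inner product space of dimension at least 3, let e ∈ V be a unit vector, and let α, β, γ, δ be real numbers. For u ∈ V write u₀ = ⟨u,e⟩e and u₁ = u − u₀, and similarly w₀, w₁ for w ∈ V. Then the inequality α‖u₀‖²‖w₀‖² + β‖u₀‖²‖w₁‖² + γ‖u₁‖²‖w₀‖² + δ‖u₁‖²‖w₁‖² ≤ 0 holds for all u, w ∈ V with ⟨u,w⟩ = 0 if and only if β ≤ 0, γ ≤ 0, δ ≤ 0, and α + δ ≤ 2√(βγ). -/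
open RealInnerProductSpace

private lemma amgm_aux (x y : ℝ) (hx : 0 ≤ x) (hy : 0 ≤ y) :
    2 * Real.sqrt (x * y) ≤ x + y := by
  nlinarith [Real.sq_sqrt hx, Real.sq_sqrt hy, Real.sqrt_nonneg x, Real.sqrt_nonneg y,
    sq_nonneg (Real.sqrt x - Real.sqrt y), Real.sqrt_mul hx y]

private lemma fwd_aux (c d ε : ℝ) (hc : 0 ≤ c) (hd : 0 ≤ d)
    (h : ∀ p q : ℝ, ε * (p ^ 2 * q ^ 2) ≤ c * p ^ 4 + d * q ^ 4) :
    ε ≤ 2 * Real.sqrt (c * d) := by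
  rcases eq_or_lt_of_le hc with hc0 | hc0
  · -- c = 0 : show ε ≤ 0
    have hε : ε ≤ 0 := by
      by_contra hε
      push_neg at hε
      have hp : (0:ℝ) ≤ (d + 1) / ε := by positivity
      have := h (Real.sqrt ((d + 1) / ε)) 1
      rw [Real.sq_sqrt hp] at this
      have h4 : (Real.sqrt ((d + 1) / ε)) ^ 4 = ((d+1)/ε) ^ 2 := by
        rw [show (4:ℕ) = 2 * 2 from rfl, pow_mul, Real.sq_sqrt hp]
      rw [h4, ← hc0] at this
      have : ε * ((d + 1) / ε) ≤ d := by linarith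
      rw [mul_div_cancel₀ _ (ne_of_gt hε)] at this
      linarith
    have := Real.sqrt_nonneg (c * d)
    linarith
  rcases eq_or_lt_of_le hd with hd0 | hd0
  · have hε : ε ≤ 0 := by
      by_contra hε
      push_neg at hε
      have hp : (0:ℝ) ≤ (c + 1) / ε := by positivity
      have := h 1 (Real.sqrt ((c + 1) / ε))
      rw [Real.sq_sqrt hp] at this
      have h4 : (Real.sqrt ((c + 1) / ε)) ^ 4 = ((c+1)/ε) ^ 2 := by
        rw [show (4:ℕ) = 2 * 2 from rfl, pow_mul, Real.sq_sqrt hp]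
      rw [h4, ← hd0] at this
      have : ε * ((c + 1) / ε) ≤ c := by linarith
      rw [mul_div_cancel₀ _ (ne_of_gt hε)] at this
      linarith
    have := Real.sqrt_nonneg (c * d)
    linarith
  · -- 0 < c, 0 < d
    have h1 := h (Real.sqrt (Real.sqrt d)) (Real.sqrt (Real.sqrt c))
    have hsd : (Real.sqrt (Real.sqrt d)) ^ 2 = Real.sqrt d :=
      Real.sq_sqrt (Real.sqrt_nonneg d)
    have hsc : (Real.sqrt (Real.sqrt c)) ^ 2 = Real.sqrt c :=
      Real.sq_sqrt (Real.sqrt_nonneg c)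
    have h4d : (Real.sqrt (Real.sqrt d)) ^ 4 = d := by
      rw [show (4:ℕ) = 2 * 2 from rfl, pow_mul, hsd, Real.sq_sqrt hd]
    have h4c : (Real.sqrt (Real.sqrt c)) ^ 4 = c := by
      rw [show (4:ℕ) = 2 * 2 from rfl, pow_mul, hsc, Real.sq_sqrt hc]
    rw [hsd, hsc, h4d, h4c] at h1
    -- h1 : ε * (√d * √c) ≤ c * d + d * c
    have hscd : Real.sqrt c * Real.sqrt d = Real.sqrt (c * d) := (Real.sqrt_mul hc d).symm
    have hcd : Real.sqrt (c * d) ^ 2 = c * d := Real.sq_sqrt (by positivity)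
    have hpos : 0 < Real.sqrt (c * d) := Real.sqrt_pos.mpr (by positivity)
    nlinarith [h1, hcd, hpos]

private lemma bwd_aux (α β γ δ A B P Q : ℝ) (hA : 0 ≤ A) (hB : 0 ≤ B)
    (hP : 0 ≤ P) (hQ : 0 ≤ Q) (hAB : A * B ≤ P * Q)
    (hβ : β ≤ 0) (hγ : γ ≤ 0) (hδ : δ ≤ 0)
    (hαδ : α + δ ≤ 2 * Real.sqrt (β * γ)) :
    α * A * B + β * A * Q + γ * P * B + δ * P * Q ≤ 0 := by
  set s := Real.sqrt (β * γ) with hs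
  have hβγ : (0:ℝ) ≤ β * γ := by nlinarith
  have key : 2 * s * (A * B) ≤ (-β) * A * Q + (-γ) * P * B := by
    have h1 := amgm_aux ((-β) * A * Q) ((-γ) * P * B)
      (mul_nonneg (mul_nonneg (neg_nonneg.mpr hβ) hA) hQ)
      (mul_nonneg (mul_nonneg (neg_nonneg.mpr hγ) hP) hB)
    have h2 : (-β) * A * Q * ((-γ) * P * B) = (β * γ) * ((A * B) * (P * Q)) := by ring
    have h3 : Real.sqrt ((β*γ) * ((A*B) * (A*B))) ≤ Real.sqrt ((β*γ) * ((A*B) * (P*Q))) := by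
      apply Real.sqrt_le_sqrt
      nlinarith [mul_nonneg (mul_nonneg hβγ (mul_nonneg hA hB)) (sub_nonneg.mpr hAB)]
    have h4 : Real.sqrt ((β*γ) * ((A*B) * (A*B))) = s * (A * B) := by
      rw [show (β*γ) * ((A*B) * (A*B)) = (β*γ) * (A*B)^2 by ring,
        Real.sqrt_mul hβγ, Real.sqrt_sq (mul_nonneg hA hB)]
    rw [h2] at h1
    calc 2 * s * (A * B) = 2 * (s * (A * B)) := by ring
      _ ≤ 2 * Real.sqrt ((β*γ) * ((A*B) * (P*Q))) := by rw [← h4]; linarith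
      _ ≤ (-β) * A * Q + (-γ) * P * B := h1
  have hs0 : 0 ≤ s := Real.sqrt_nonneg _
  nlinarith [mul_nonneg hA hB, mul_nonneg hP hQ,
    mul_nonneg (mul_nonneg hA hB) (sub_nonneg.mpr hαδ)]

private lemma exists_pair {V : Type*} [NormedAddCommGroup V] [InnerProductSpace ℝ V]
    [FiniteDimensional ℝ V] (hdim : 3 ≤ Module.finrank ℝ V)
    (e : V) (he : ‖e‖ = 1) :
    ∃ f g : V, ‖f‖ = 1 ∧ ‖g‖ = 1 ∧ ⟪e, f⟫ = 0 ∧ ⟪e, g⟫ = 0 ∧ ⟪f, g⟫ = 0 := by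
  have hene : e ≠ 0 := by intro h; rw [h, norm_zero] at he; norm_num at he
  set K := (ℝ ∙ e)ᗮ with hK
  have hrank : Module.finrank ℝ (ℝ ∙ e) + Module.finrank ℝ K = Module.finrank ℝ V :=
    Submodule.finrank_add_finrank_orthogonal _
  have hspan : Module.finrank ℝ (ℝ ∙ e) = 1 := finrank_span_singleton hene
  have hK2 : 2 ≤ Module.finrank ℝ K := by omega
  set b := stdOrthonormalBasis ℝ K with hb
  have h0 : (0 : ℕ) < Module.finrank ℝ K := by omega
  have h1 : (1 : ℕ) < Module.finrank ℝ K := by omega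
  refine ⟨(b ⟨0, h0⟩ : K), (b ⟨1, h1⟩ : K), ?_, ?_, ?_, ?_, ?_⟩
  · exact b.orthonormal.1 _
  · exact b.orthonormal.1 _
  · exact (Submodule.mem_orthogonal _ _).mp (b ⟨0, h0⟩).2 e
      (Submodule.mem_span_singleton_self e)
  · exact (Submodule.mem_orthogonal _ _).mp (b ⟨1, h1⟩).2 e
      (Submodule.mem_span_singleton_self e)
  · have := b.orthonormal.2 (i := ⟨0, h0⟩) (j := ⟨1, h1⟩) (by simp)
    exact this

/-- Higher-dimensional criterion for the weak Ma-Trudinger-Wang condition: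
in dimension at least three, the quadratic-form inequality in the projections
onto a unit vector `e` holds for all orthogonal pairs `u, w` iff `β ≤ 0`,
`γ ≤ 0`, `δ ≤ 0` and `α + δ ≤ 2√(βγ)`. -/
theorem stmt_2 {V : Type*} [NormedAddCommGroup V] [InnerProductSpace ℝ V]
    [FiniteDimensional ℝ V] (hdim : 3 ≤ Module.finrank ℝ V)
    (e : V) (he : ‖e‖ = 1) (α β γ δ : ℝ) :
    (∀ u w : V, ⟪u, w⟫ = 0 →
        α * ‖⟪u, e⟫ • e‖ ^ 2 * ‖⟪w, e⟫ • e‖ ^ 2 +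
        β * ‖⟪u, e⟫ • e‖ ^ 2 * ‖w - ⟪w, e⟫ • e‖ ^ 2 +
        γ * ‖u - ⟪u, e⟫ • e‖ ^ 2 * ‖⟪w, e⟫ • e‖ ^ 2 +
        δ * ‖u - ⟪u, e⟫ • e‖ ^ 2 * ‖w - ⟪w, e⟫ • e‖ ^ 2 ≤ 0) ↔
      (β ≤ 0 ∧ γ ≤ 0 ∧ δ ≤ 0 ∧ α + δ ≤ 2 * Real.sqrt (β * γ)) := by
  have hee : ⟪e, e⟫ = (1:ℝ) := by
    rw [real_inner_self_eq_norm_sq, he]; norm_num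
  have hnsm : ∀ (t : ℝ) (v : V), ‖v‖ = 1 → ‖t • v‖ ^ 2 = t ^ 2 := by
    intro t v hv
    rw [norm_smul, hv, mul_one, Real.norm_eq_abs, sq_abs]
  constructor
  · intro H
    obtain ⟨f, g, hf, hg, hef, heg, hfg⟩ := exists_pair hdim e he
    have hfe : ⟪f, e⟫ = 0 := by rw [real_inner_comm]; exact hef
    have hge : ⟪g, e⟫ = 0 := by rw [real_inner_comm]; exact heg
    have hgf : ⟪g, f⟫ = 0 := by rw [real_inner_comm]; exact hfg
    -- general test: u = p•e + q•f, w = -q•e + p•f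
    have key : ∀ p q : ℝ, α * (p^2 * q^2) + β * (p^2 * p^2) + γ * (q^2 * q^2)
        + δ * (q^2 * p^2) ≤ 0 := by
      intro p q
      have horth : ⟪p • e + q • f, (-q) • e + p • f⟫ = (0:ℝ) := by
        simp [inner_add_left, inner_add_right, inner_smul_left, inner_smul_right,
          hee, hef, hfe, real_inner_self_eq_norm_sq, hf]
        rw [he]; ring
      have hu := H (p • e + q • f) ((-q) • e + p • f) horth
      have hue : ⟪p • e + q • f, e⟫ = p := by
        simp [inner_add_left, inner_smul_left, hee, hfe, he]
      have hwe : ⟪(-q) • e + p • f, e⟫ = -q := by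
        simp [inner_add_left, inner_smul_left, hee, hfe, he]
      rw [hue, hwe] at hu
      have hu1 : (p • e + q • f) - p • e = q • f := by abel
      have hw1 : ((-q) • e + p • f) - (-q) • e = p • f := by abel
      rw [hu1, hw1, hnsm p e he, hnsm (-q) e he, hnsm q f hf, hnsm p f hf] at hu
      calc α * (p^2 * q^2) + β * (p^2 * p^2) + γ * (q^2 * q^2) + δ * (q^2 * p^2)
          = α * p ^ 2 * (-q) ^ 2 + β * p ^ 2 * p ^ 2 + γ * q ^ 2 * (-q) ^ 2
            + δ * q ^ 2 * p ^ 2 := by ring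
        _ ≤ 0 := hu
    have hβ : β ≤ 0 := by have := key 1 0; linarith [key 1 0]
    have hγ : γ ≤ 0 := by have := key 0 1; linarith [key 0 1]
    have hδ : δ ≤ 0 := by
      have horth : ⟪f, g⟫ = (0:ℝ) := hfg
      have hu := H f g horth
      rw [hfe, hge] at hu
      simp only [zero_smul, sub_zero, norm_zero] at hu
      rw [hf, hg] at hu
      norm_num at hu
      linarith
    refine ⟨hβ, hγ, hδ, ?_⟩
    have := fwd_aux (-β) (-γ) (α + δ) (by linarith) (by linarith) ?_
    · calc α + δ ≤ 2 * Real.sqrt ((-β) * (-γ)) := this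
        _ = 2 * Real.sqrt (β * γ) := by rw [neg_mul_neg]
    · intro p q
      have := key p q
      nlinarith [key p q]
  · rintro ⟨hβ, hγ, hδ, hαδ⟩ u w huw
    set a := ⟪u, e⟫ with ha
    set c := ⟪w, e⟫ with hc
    have hA : ‖a • e‖ ^ 2 = a ^ 2 := hnsm a e he
    have hB : ‖c • e‖ ^ 2 = c ^ 2 := hnsm c e he
    have hinner : ⟪u - a • e, w - c • e⟫ = -(a * c) := by
      simp [inner_sub_left, inner_sub_right, inner_smul_left, inner_smul_right,
        hee, huw, ha, hc, real_inner_comm w e, he]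
    have hcs : (a * c) ^ 2 ≤ ‖u - a • e‖ ^ 2 * ‖w - c • e‖ ^ 2 := by
      have h1 := abs_real_inner_le_norm (u - a • e) (w - c • e)
      have h2 : |⟪u - a • e, w - c • e⟫| = |a * c| := by rw [hinner, abs_neg]
      rw [h2] at h1
      nlinarith [abs_nonneg (a*c), sq_abs (a*c), norm_nonneg (u - a•e), norm_nonneg (w - c•e)]
    have hAB : ‖a • e‖ ^ 2 * ‖c • e‖ ^ 2 ≤ ‖u - a • e‖ ^ 2 * ‖w - c • e‖ ^ 2 := by
      rw [hA, hB]; nlinarith [hcs]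
    have := bwd_aux α β γ δ (‖a • e‖ ^ 2) (‖c • e‖ ^ 2) (‖u - a • e‖ ^ 2)
      (‖w - c • e‖ ^ 2) (by positivity) (by positivity) (by positivity) (by positivity)
      hAB hβ hγ hδ hαδ
    linarith
end

section
/- Let V be a finite-dimensional real inner product space of dimension at least 3, let e ∈ V be a unit vector, and let α, β, γ, δ be real numbers. For u ∈ V write u₀ = ⟨u,e⟩e and u₁ = u − u₀, and similarly w₀, w₁ for w ∈ V. Then the strict inequality α‖u₀‖²‖w₀‖² + β‖u₀‖²‖w₁‖² + γ‖u₁‖²‖w₀‖² + δ‖u₁‖²‖w₁‖² < 0 holds for all nonzero u, w ∈ V with ⟨u,w⟩ = 0 if and only if β < 0, γ < 0, δ < 0, and α + δ < 2√(βγ). -/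
open RealInnerProductSpace

theorem aux_exists {V : Type*} [NormedAddCommGroup V] [InnerProductSpace ℝ V]
    [FiniteDimensional ℝ V] (hdim : 3 ≤ Module.finrank ℝ V) (e : V) (he : ‖e‖ = 1) :
    ∃ f g : V, ‖f‖ = 1 ∧ ‖g‖ = 1 ∧ ⟪f, e⟫ = 0 ∧ ⟪g, e⟫ = 0 ∧ ⟪f, g⟫ = 0 := by
  have he0 : e ≠ 0 := by intro h; rw [h, norm_zero] at he; norm_num at he
  have h1 : ∃ f : V, f ∈ (ℝ ∙ e)ᗮ ∧ f ≠ 0 := by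
    apply Submodule.exists_mem_ne_zero_of_ne_bot
    intro hbot
    have h := Submodule.finrank_add_finrank_orthogonal (𝕜 := ℝ) (ℝ ∙ e)
    rw [hbot, finrank_bot, finrank_span_singleton he0] at h
    omega
  obtain ⟨f, hfmem, hf0⟩ := h1
  have hfe : ⟪f, e⟫ = 0 := by
    have := (Submodule.mem_orthogonal _ f).mp hfmem e (Submodule.mem_span_singleton_self e)
    rwa [real_inner_comm] at this
  have h2 : ∃ g : V, g ∈ ((ℝ ∙ e) ⊔ (ℝ ∙ f))ᗮ ∧ g ≠ 0 := by
    apply Submodule.exists_mem_ne_zero_of_ne_bot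
    intro hbot
    have h := Submodule.finrank_add_finrank_orthogonal (𝕜 := ℝ) ((ℝ ∙ e) ⊔ (ℝ ∙ f))
    rw [hbot, finrank_bot] at h
    have h3 := Submodule.finrank_add_le_finrank_add_finrank (ℝ ∙ e) (ℝ ∙ f)
    rw [finrank_span_singleton he0, finrank_span_singleton hf0] at h3
    omega
  obtain ⟨g, hgmem, hg0⟩ := h2
  have hge : ⟪g, e⟫ = 0 := by
    have := (Submodule.mem_orthogonal _ g).mp hgmem e
      (Submodule.mem_sup_left (Submodule.mem_span_singleton_self e))
    rwa [real_inner_comm] at this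
  have hfg : ⟪f, g⟫ = 0 := (Submodule.mem_orthogonal _ g).mp hgmem f
      (Submodule.mem_sup_right (Submodule.mem_span_singleton_self f))
  have hnf : ‖f‖ ≠ 0 := norm_ne_zero_iff.mpr hf0
  have hng : ‖g‖ ≠ 0 := norm_ne_zero_iff.mpr hg0
  refine ⟨‖f‖⁻¹ • f, ‖g‖⁻¹ • g, ?_, ?_, ?_, ?_, ?_⟩
  · rw [norm_smul]; simp [abs_of_nonneg, inv_mul_cancel₀ hnf]
  · rw [norm_smul]; simp [inv_mul_cancel₀ hng]
  · rw [real_inner_smul_left, hfe, mul_zero]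
  · rw [real_inner_smul_left, hge, mul_zero]
  · rw [real_inner_smul_left, real_inner_smul_right, hfg]; ring

theorem aux_n0 {V : Type*} [NormedAddCommGroup V] [InnerProductSpace ℝ V]
    {e : V} (he : ‖e‖ = 1) (u : V) : ‖⟪u, e⟫ • e‖ ^ 2 = ⟪u, e⟫ ^ 2 := by
  rw [norm_smul, he, mul_one, Real.norm_eq_abs, sq_abs]

theorem aux_n1 {V : Type*} [NormedAddCommGroup V] [InnerProductSpace ℝ V]
    {e : V} (he : ‖e‖ = 1) (u : V) :
    ‖u - ⟪u, e⟫ • e‖ ^ 2 = ‖u‖ ^ 2 - ⟪u, e⟫ ^ 2 := by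
  have h := @norm_sub_sq_real V _ _ u (⟪u, e⟫ • e)
  rw [h, real_inner_smul_right, norm_smul, he, mul_one, Real.norm_eq_abs, sq_abs]
  ring

theorem aux_alg (α β γ δ a₀ a₁ b₀ b₁ : ℝ) (hβ : β < 0) (hγ : γ < 0) (hδ : δ < 0)
    (hαδ : α + δ < 2 * Real.sqrt (β * γ)) (ha₀ : 0 ≤ a₀) (ha₁ : 0 ≤ a₁)
    (hb₀ : 0 ≤ b₀) (hb₁ : 0 ≤ b₁) (ha : 0 < a₀ + a₁) (hb : 0 < b₀ + b₁)
    (hkey : a₀ * b₀ ≤ a₁ * b₁) :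
    α * a₀ * b₀ + β * a₀ * b₁ + γ * a₁ * b₀ + δ * a₁ * b₁ < 0 := by
  set s := Real.sqrt (β * γ) with hs
  have hbg : 0 < β * γ := mul_pos_of_neg_of_neg hβ hγ
  have hs2 : s ^ 2 = β * γ := Real.sq_sqrt hbg.le
  have hs0 : 0 < s := Real.sqrt_pos.mpr hbg
  rcases eq_or_lt_of_le ha₀ with h0 | h0
  · rw [← h0]
    have ha₁' : 0 < a₁ := by nlinarith
    ring_nf
    rcases lt_or_ge 0 b₀ with h2 | h2
    · nlinarith [mul_pos ha₁' h2, mul_nonneg ha₁'.le hb₁]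
    · have hb₁' : 0 < b₁ := by linarith
      nlinarith [mul_pos ha₁' hb₁', mul_nonneg ha₁'.le hb₀]
  rcases eq_or_lt_of_le hb₀ with h1 | h1
  · rw [← h1]
    have hb₁' : 0 < b₁ := by nlinarith
    ring_nf
    rcases lt_or_ge 0 a₀ with h2 | h2
    · nlinarith [mul_pos h2 hb₁', mul_nonneg ha₁ hb₁'.le]
    · have ha₀' : a₀ = 0 := le_antisymm h2 ha₀
      have ha₁' : 0 < a₁ := by nlinarith
      nlinarith [mul_pos ha₁' hb₁']
  have hab : 0 < a₀ * b₀ := mul_pos h0 h1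
  set X := -β * (a₀ * b₁) with hX'
  set Y := -γ * (a₁ * b₀) with hY'
  have hX : 0 ≤ X := by rw [hX']; exact mul_nonneg (by linarith) (by positivity)
  have hY : 0 ≤ Y := by rw [hY']; exact mul_nonneg (by linarith) (by positivity)
  have hc : 0 < 2 * s * (a₀ * b₀) := by positivity
  have hprod : (2 * s * (a₀ * b₀)) ^ 2 ≤ 4 * (X * Y) := by
    have hmul : s ^ 2 * (a₀ * b₀) * (a₀ * b₀) ≤ s ^ 2 * (a₀ * b₀) * (a₁ * b₁) := by
      apply mul_le_mul_of_nonneg_left hkey; positivity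
    have hXY : X * Y = s ^ 2 * ((a₀ * b₀) * (a₁ * b₁)) := by rw [hs2, hX', hY']; ring
    nlinarith
  have hXYc : 0 < X + Y + 2 * s * (a₀ * b₀) := by linarith
  have hmain : 2 * s * (a₀ * b₀) ≤ X + Y := by nlinarith [sq_nonneg (X - Y)]
  have hdd : δ * (a₁ * b₁) ≤ δ * (a₀ * b₀) := mul_le_mul_of_nonpos_left hkey hδ.le
  have hgoal : α * a₀ * b₀ + β * a₀ * b₁ + γ * a₁ * b₀ + δ * a₁ * b₁
      = α * (a₀ * b₀) + δ * (a₁ * b₁) - X - Y := by rw [hX', hY']; ring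
  rw [hgoal]
  nlinarith [mul_pos hab hs0]

set_option maxHeartbeats 1000000 in
/-- Higher-dimensional criterion for the strong Ma-Trudinger-Wang condition:
in dimension at least three, the strict quadratic-form inequality in the
projections onto a unit vector `e` holds for all nonzero orthogonal pairs
`u, w` iff `β < 0`, `γ < 0`, `δ < 0` and `α + δ < 2√(βγ)`. -/
theorem stmt_3 {V : Type*} [NormedAddCommGroup V] [InnerProductSpace ℝ V]
    [FiniteDimensional ℝ V] (hdim : 3 ≤ Module.finrank ℝ V)
    (e : V) (he : ‖e‖ = 1) (α β γ δ : ℝ) :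
    (∀ u w : V, u ≠ 0 → w ≠ 0 → ⟪u, w⟫ = 0 →
        α * ‖⟪u, e⟫ • e‖ ^ 2 * ‖⟪w, e⟫ • e‖ ^ 2 +
        β * ‖⟪u, e⟫ • e‖ ^ 2 * ‖w - ⟪w, e⟫ • e‖ ^ 2 +
        γ * ‖u - ⟪u, e⟫ • e‖ ^ 2 * ‖⟪w, e⟫ • e‖ ^ 2 +
        δ * ‖u - ⟪u, e⟫ • e‖ ^ 2 * ‖w - ⟪w, e⟫ • e‖ ^ 2 < 0) ↔
      (β < 0 ∧ γ < 0 ∧ δ < 0 ∧ α + δ < 2 * Real.sqrt (β * γ)) := by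
  have hee : ⟪e, e⟫ = 1 := by rw [real_inner_self_eq_norm_sq, he]; norm_num
  have he0 : e ≠ 0 := by intro hh; rw [hh, norm_zero] at he; norm_num at he
  constructor
  · intro h
    obtain ⟨f, g, hf1, hg1, hfe, hge, hfg⟩ := aux_exists hdim e he
    have hf0 : f ≠ 0 := by intro hh; rw [hh, norm_zero] at hf1; norm_num at hf1
    have hg0 : g ≠ 0 := by intro hh; rw [hh, norm_zero] at hg1; norm_num at hg1
    have hef : ⟪e, f⟫ = 0 := by rw [real_inner_comm]; exact hfe
    have hff : ⟪f, f⟫ = 1 := by rw [real_inner_self_eq_norm_sq, hf1]; norm_num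
    have hβ : β < 0 := by
      have hb := h e f he0 hf0 hef
      rw [aux_n0 he, aux_n0 he, aux_n1 he, aux_n1 he, hee, hfe, he, hf1] at hb
      nlinarith
    have hγ : γ < 0 := by
      have hb := h f e hf0 he0 hfe
      rw [aux_n0 he, aux_n0 he, aux_n1 he, aux_n1 he, hee, hfe, he, hf1] at hb
      nlinarith
    have hδ : δ < 0 := by
      have hb := h f g hf0 hg0 hfg
      rw [aux_n0 he, aux_n0 he, aux_n1 he, aux_n1 he, hfe, hge, hf1, hg1] at hb
      nlinarith
    refine ⟨hβ, hγ, hδ, ?_⟩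
    set x := Real.sqrt (Real.sqrt (-γ)) with hx'
    set y := Real.sqrt (Real.sqrt (-β)) with hy'
    have hx : 0 < x := Real.sqrt_pos.mpr (Real.sqrt_pos.mpr (by linarith))
    have hy : 0 < y := Real.sqrt_pos.mpr (Real.sqrt_pos.mpr (by linarith))
    have hx2 : x ^ 2 = Real.sqrt (-γ) := Real.sq_sqrt (Real.sqrt_nonneg _)
    have hy2 : y ^ 2 = Real.sqrt (-β) := Real.sq_sqrt (Real.sqrt_nonneg _)
    have hx4 : x ^ 2 * x ^ 2 = -γ := by rw [hx2]; exact Real.mul_self_sqrt (by linarith)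
    have hy4 : y ^ 2 * y ^ 2 = -β := by rw [hy2]; exact Real.mul_self_sqrt (by linarith)
    have hxy2 : x ^ 2 * y ^ 2 = Real.sqrt (β * γ) := by
      rw [hx2, hy2, ← Real.sqrt_mul (by linarith : (0:ℝ) ≤ -γ)]
      ring_nf
    set u := x • e + y • f with hu'
    set w := (-y) • e + x • f with hw'
    have hue : ⟪u, e⟫ = x := by
      simp only [hu', inner_add_left, real_inner_smul_left, hee, hfe]
      ring
    have hwe : ⟪w, e⟫ = -y := by
      simp only [hw', inner_add_left, real_inner_smul_left, hee, hfe]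
      ring
    have huw : ⟪u, w⟫ = 0 := by
      simp only [hu', hw', inner_add_left, inner_add_right, real_inner_smul_left,
        real_inner_smul_right, hee, hfe, hef, hff]
      ring
    have hun : ‖u‖ ^ 2 = x ^ 2 + y ^ 2 := by
      rw [← real_inner_self_eq_norm_sq]
      simp only [hu', inner_add_left, inner_add_right, real_inner_smul_left,
        real_inner_smul_right, hee, hfe, hef, hff]
      ring
    have hwn : ‖w‖ ^ 2 = x ^ 2 + y ^ 2 := by
      rw [← real_inner_self_eq_norm_sq]
      simp only [hw', inner_add_left, inner_add_right, real_inner_smul_left,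
        real_inner_smul_right, hee, hfe, hef, hff]
      ring
    have hu0 : u ≠ 0 := by
      intro hh; rw [hh, inner_zero_left] at hue; exact hx.ne hue
    have hw0 : w ≠ 0 := by
      intro hh; rw [hh, inner_zero_left] at hwe; linarith [hwe ▸ hy]
    have hb := h u w hu0 hw0 huw
    rw [aux_n0 he, aux_n0 he, aux_n1 he, aux_n1 he, hue, hwe, hun, hwn] at hb
    have hbg : 0 < β * γ := mul_pos_of_neg_of_neg hβ hγ
    have hs0 : 0 < Real.sqrt (β * γ) := Real.sqrt_pos.mpr hbg
    have hs2 : Real.sqrt (β * γ) ^ 2 = β * γ := Real.sq_sqrt hbg.le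
    have hb2 : (α + δ) * (x ^ 2 * y ^ 2) + β * (x ^ 2 * x ^ 2) + γ * (y ^ 2 * y ^ 2) < 0 := by
      nlinarith [hb]
    rw [hxy2, hx4, hy4] at hb2
    nlinarith [hb2, hs0, hs2]
  · rintro ⟨hβ, hγ, hδ, hαδ⟩ u w hu hw huw
    rw [aux_n0 he, aux_n0 he, aux_n1 he, aux_n1 he]
    have hun : 0 < ‖u‖ := norm_pos_iff.mpr hu
    have hwn : 0 < ‖w‖ := norm_pos_iff.mpr hw
    have ha₁ : 0 ≤ ‖u‖ ^ 2 - ⟪u, e⟫ ^ 2 := by rw [← aux_n1 he]; positivity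
    have hb₁ : 0 ≤ ‖w‖ ^ 2 - ⟪w, e⟫ ^ 2 := by rw [← aux_n1 he]; positivity
    have hin : ⟪u - ⟪u, e⟫ • e, w - ⟪w, e⟫ • e⟫ = -(⟪u, e⟫ * ⟪w, e⟫) := by
      simp only [inner_sub_left, inner_sub_right, real_inner_smul_left,
        real_inner_smul_right, hee, huw, real_inner_comm e w]
      ring
    have hcs := real_inner_mul_inner_self_le (u - ⟪u, e⟫ • e) (w - ⟪w, e⟫ • e)
    rw [hin, real_inner_self_eq_norm_sq, real_inner_self_eq_norm_sq,
      aux_n1 he, aux_n1 he] at hcs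
    exact aux_alg α β γ δ (⟪u, e⟫ ^ 2) (‖u‖ ^ 2 - ⟪u, e⟫ ^ 2) (⟪w, e⟫ ^ 2)
      (‖w‖ ^ 2 - ⟪w, e⟫ ^ 2) hβ hγ hδ hαδ (sq_nonneg _) ha₁ (sq_nonneg _) hb₁
      (by nlinarith) (by nlinarith) (by nlinarith [hcs])
end

section
/- Let V be a real inner product space and let u, v, w ∈ V with v ≠ 0. For s near 0 let u₀(s) = (⟨u, v+s·w⟩/‖v+s·w‖²)(v+s·w) be the orthogonal projection of u onto the line spanned by v + s·w, and write u₀ = u₀(0), u₁ = u − u₀, w₀ = (⟨v,w⟩/‖v‖²)v, w₁ = w − w₀. Then the derivative of s ↦ ‖u₀(s)‖² at s = 0 equals 2⟨u₀,v⟩⟨u₁,w₁⟩/‖v‖². -/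
open RealInnerProductSpace

/-- For `v ≠ 0`, let `u₀(s)` be the orthogonal projection of `u` onto the line
spanned by `v + s w`. Writing `u₀ = u₀(0)`, `u₁ = u - u₀` and
`w₁ = w - (⟨v,w⟫/‖v‖²) v`, the derivative of `s ↦ ‖u₀(s)‖²` at `s = 0` is
`2 ⟨u₀,v⟩ ⟨u₁,w₁⟩ / ‖v‖²`. -/
theorem stmt_7 {V : Type*} [NormedAddCommGroup V] [InnerProductSpace ℝ V]
    (u v w : V) (hv : v ≠ 0) :
    deriv (fun s : ℝ =>
        ‖(⟪u, v + s • w⟫ / ‖v + s • w‖ ^ 2) • (v + s • w)‖ ^ 2) 0 =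
      2 * ⟪(⟪u, v⟫ / ‖v‖ ^ 2) • v, v⟫ *
        ⟪u - (⟪u, v⟫ / ‖v‖ ^ 2) • v, w - (⟪v, w⟫ / ‖v‖ ^ 2) • v⟫ / ‖v‖ ^ 2 := by
  have hv2 : (‖v‖ : ℝ) ^ 2 ≠ 0 := pow_ne_zero 2 (norm_ne_zero_iff.mpr hv)
  have hfun : (fun s : ℝ =>
        ‖(⟪u, v + s • w⟫ / ‖v + s • w‖ ^ 2) • (v + s • w)‖ ^ 2) =
      fun s : ℝ => (⟪u, v⟫ + s * ⟪u, w⟫) ^ 2 /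
        (‖v‖ ^ 2 + 2 * s * ⟪v, w⟫ + s ^ 2 * ‖w‖ ^ 2) := by
    funext s
    have hn : ‖v + s • w‖ ^ 2 = ‖v‖ ^ 2 + 2 * s * ⟪v, w⟫ + s ^ 2 * ‖w‖ ^ 2 := by
      rw [norm_add_sq_real, real_inner_smul_right, norm_smul, mul_pow,
        Real.norm_eq_abs, sq_abs]
      ring
    have hi : ⟪u, v + s • w⟫ = ⟪u, v⟫ + s * ⟪u, w⟫ := by
      rw [inner_add_right, real_inner_smul_right]
    rw [norm_smul, mul_pow, hi, hn]
    rcases eq_or_ne (‖v‖ ^ 2 + 2 * s * ⟪v, w⟫ + s ^ 2 * ‖w‖ ^ 2) 0 with h | h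
    · simp [h]
    · rw [Real.norm_eq_abs, sq_abs, div_pow]
      field_simp
  rw [hfun]
  have h1 : HasDerivAt (fun s : ℝ => (⟪u, v⟫ + s * ⟪u, w⟫) ^ 2)
      (2 * ⟪u, v⟫ * ⟪u, w⟫) 0 := by
    have := (((hasDerivAt_id (0:ℝ)).mul_const ⟪u, w⟫).const_add ⟪u, v⟫).pow 2
    simp at this
    exact this
  have h2 : HasDerivAt
      (fun s : ℝ => ‖v‖ ^ 2 + 2 * s * ⟪v, w⟫ + s ^ 2 * ‖w‖ ^ 2)
      (2 * ⟪v, w⟫) 0 := by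
    have ha : HasDerivAt (fun s : ℝ => ‖v‖ ^ 2 + 2 * s * ⟪v, w⟫) (2 * ⟪v, w⟫) 0 := by
      have := (((hasDerivAt_id (0:ℝ)).const_mul 2).mul_const ⟪v, w⟫).const_add (‖v‖ ^ 2)
      simpa [mul_comm, mul_assoc] using this
    have hb : HasDerivAt (fun s : ℝ => s ^ 2 * ‖w‖ ^ 2) 0 0 := by
      have := (hasDerivAt_pow 2 (0:ℝ)).mul_const (‖w‖ ^ 2)
      simpa using this
    have := ha.add hb
    simp at this
    exact this
  have hd0 : (‖v‖ ^ 2 + 2 * (0:ℝ) * ⟪v, w⟫ + (0:ℝ) ^ 2 * ‖w‖ ^ 2) ≠ 0 := by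
    simpa using hv2
  rw [show deriv (fun s : ℝ => (⟪u, v⟫ + s * ⟪u, w⟫) ^ 2 /
      (‖v‖ ^ 2 + 2 * s * ⟪v, w⟫ + s ^ 2 * ‖w‖ ^ 2)) 0 = _ from (h1.div h2 hd0).deriv]
  simp only [inner_sub_left, inner_sub_right, real_inner_smul_left,
    real_inner_smul_right, real_inner_self_eq_norm_sq, real_inner_comm v u]
  field_simp
  ring
end

section
/- Let V be a real inner product space and let u, v, w ∈ V with v ≠ 0. For s near 0 let u₀(s) = (⟨u, v+s·w⟩/‖v+s·w‖²)(v+s·w) be the orthogonal projection of u onto the line spanned by v + s·w, and write u₀ = u₀(0), u₁ = u − u₀, w₀ = (⟨v,w⟩/‖v‖²)v, w₁ = w − w₀. Then the second derivative of s ↦ ‖u₀(s)‖² at s = 0 equals (2/‖v‖²)·(⟨u₁,w₁⟩² − ‖w₁‖²‖u₀‖² − 2⟨u₀,w₀⟩⟨u₁,w₁⟩). -/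
open RealInnerProductSpace

section Aux

variable {V : Type*} [NormedAddCommGroup V] [InnerProductSpace ℝ V]

/-- rewrite the function as a rational function of s -/
lemma stmt8_fun_eq (u v w : V) (s : ℝ) :
    ‖(⟪u, v + s • w⟫ / ‖v + s • w‖ ^ 2) • (v + s • w)‖ ^ 2 =
      (⟪u, v⟫ + s * ⟪u, w⟫) ^ 2 /
        (‖v‖ ^ 2 + 2 * s * ⟪v, w⟫ + s ^ 2 * ‖w‖ ^ 2) := by
  have hx : ⟪u, v + s • w⟫ = ⟪u, v⟫ + s * ⟪u, w⟫ := by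
    rw [inner_add_right, real_inner_smul_right]
  have hq : ‖v + s • w‖ ^ 2 = ‖v‖ ^ 2 + 2 * s * ⟪v, w⟫ + s ^ 2 * ‖w‖ ^ 2 := by
    rw [← real_inner_self_eq_norm_sq, inner_add_add_self, real_inner_smul_left,
      real_inner_smul_right, real_inner_smul_left, real_inner_smul_right,
      ← real_inner_self_eq_norm_sq, ← real_inner_self_eq_norm_sq,
      real_inner_comm w v]
    ring
  rw [norm_smul, mul_pow, ← hx, ← hq]
  rcases eq_or_ne (v + s • w) 0 with h | h
  · simp [h]
  · have hn : ‖v + s • w‖ ^ 2 ≠ 0 := by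
      have : ‖v + s • w‖ ≠ 0 := norm_ne_zero_iff.mpr h
      positivity
    rw [Real.norm_eq_abs, sq_abs]
    field_simp

end Aux

/-- For `v ≠ 0`, let `u₀(s)` be the orthogonal projection of `u` onto the line
spanned by `v + s w`. Writing `u₀ = u₀(0)`, `u₁ = u - u₀`,
`w₀ = (⟨v,w⟩/‖v‖²) v` and `w₁ = w - w₀`, the second derivative of
`s ↦ ‖u₀(s)‖²` at `s = 0` is
`(2/‖v‖²) (⟨u₁,w₁⟩² - ‖w₁‖² ‖u₀‖² - 2 ⟨u₀,w₀⟩ ⟨u₁,w₁⟩)`. -/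
theorem stmt_8 {V : Type*} [NormedAddCommGroup V] [InnerProductSpace ℝ V]
    (u v w : V) (hv : v ≠ 0) :
    deriv (deriv (fun s : ℝ =>
        ‖(⟪u, v + s • w⟫ / ‖v + s • w‖ ^ 2) • (v + s • w)‖ ^ 2)) 0 =
      (2 / ‖v‖ ^ 2) *
        (⟪u - (⟪u, v⟫ / ‖v‖ ^ 2) • v, w - (⟪v, w⟫ / ‖v‖ ^ 2) • v⟫ ^ 2 -
          ‖w - (⟪v, w⟫ / ‖v‖ ^ 2) • v‖ ^ 2 * ‖(⟪u, v⟫ / ‖v‖ ^ 2) • v‖ ^ 2 -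
          2 * ⟪(⟪u, v⟫ / ‖v‖ ^ 2) • v, (⟪v, w⟫ / ‖v‖ ^ 2) • v⟫ *
            ⟪u - (⟪u, v⟫ / ‖v‖ ^ 2) • v, w - (⟪v, w⟫ / ‖v‖ ^ 2) • v⟫) := by
  set U : ℝ := ⟪u, v⟫ with hU
  set X : ℝ := ⟪u, w⟫ with hX
  set W : ℝ := ⟪v, w⟫ with hW
  set B : ℝ := ‖v‖ ^ 2 with hB
  set N : ℝ := ‖w‖ ^ 2 with hN
  have hB0 : B ≠ 0 := by
    have : ‖v‖ ≠ 0 := norm_ne_zero_iff.mpr hv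
    rw [hB]; positivity
  -- polynomials
  have hfun : (fun s : ℝ =>
      ‖(⟪u, v + s • w⟫ / ‖v + s • w‖ ^ 2) • (v + s • w)‖ ^ 2) =
      fun s => (U + s * X) ^ 2 / (B + 2 * s * W + s ^ 2 * N) := by
    funext s
    exact stmt8_fun_eq u v w s
  rw [hfun]
  -- derivatives of p and q at any point
  have hpd : ∀ s : ℝ, HasDerivAt (fun s : ℝ => U + s * X) X s := fun s => by
    simpa using ((hasDerivAt_id s).mul_const X).const_add U
  have hqd : ∀ s : ℝ, HasDerivAt (fun s : ℝ => B + 2 * s * W + s ^ 2 * N)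
      (2 * W + 2 * s * N) s := fun s => by
    have h1 : HasDerivAt (fun s : ℝ => B + 2 * s * W) (2 * W) s := by
      simpa [mul_comm, mul_assoc] using
        (((hasDerivAt_id s).const_mul (2:ℝ)).mul_const W).const_add B
    have h2 : HasDerivAt (fun s : ℝ => s ^ 2 * N) (2 * s * N) s := by
      simpa [mul_comm] using (hasDerivAt_pow 2 s).mul_const N
    exact h1.add h2
  -- first derivative formula, valid where q s ≠ 0
  have hderiv : ∀ s : ℝ, (B + 2 * s * W + s ^ 2 * N) ≠ 0 →
      HasDerivAt (fun s : ℝ => (U + s * X) ^ 2 / (B + 2 * s * W + s ^ 2 * N))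
        ((2 * (U + s * X) * X * (B + 2 * s * W + s ^ 2 * N)
          - (U + s * X) ^ 2 * (2 * W + 2 * s * N))
          / (B + 2 * s * W + s ^ 2 * N) ^ 2) s := by
    intro s hs
    exact (((hpd s).pow 2).div (hqd s) hs).congr_deriv (by simp only [Pi.pow_apply, Nat.cast_ofNat, pow_one]; ring)
  -- q is continuous and nonzero near 0
  have hqcont : Continuous (fun s : ℝ => B + 2 * s * W + s ^ 2 * N) := by
    continuity
  have hq0 : (fun s : ℝ => B + 2 * s * W + s ^ 2 * N) 0 ≠ 0 := by simpa using hB0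
  have hev : ∀ᶠ s in nhds (0:ℝ), (B + 2 * s * W + s ^ 2 * N) ≠ 0 :=
    hqcont.continuousAt.eventually_ne hq0
  -- deriv of the function agrees with the formula near 0
  have hev2 : deriv (fun s : ℝ => (U + s * X) ^ 2 / (B + 2 * s * W + s ^ 2 * N))
      =ᶠ[nhds (0:ℝ)] fun s =>
        (2 * (U + s * X) * X * (B + 2 * s * W + s ^ 2 * N)
          - (U + s * X) ^ 2 * (2 * W + 2 * s * N))
          / (B + 2 * s * W + s ^ 2 * N) ^ 2 := by
    filter_upwards [hev] with s hs
    exact (hderiv s hs).deriv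
  rw [hev2.deriv_eq]
  -- now compute the derivative of the formula at 0
  have hnum : HasDerivAt (fun s : ℝ =>
      2 * (U + s * X) * X * (B + 2 * s * W + s ^ 2 * N)
        - (U + s * X) ^ 2 * (2 * W + 2 * s * N))
      (2 * X * X * B + 2 * U * X * (2 * W) - (2 * U * X * (2 * W) + U ^ 2 * (2 * N))) 0 := by
    have h1 : HasDerivAt (fun s : ℝ => 2 * (U + s * X) * X) (2 * X * X) 0 := by
      simpa using (((hpd 0).const_mul 2).mul_const X)
    have h2 : HasDerivAt (fun s : ℝ => 2 * W + 2 * s * N) (2 * N) 0 := by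
      simpa [mul_comm, mul_assoc] using
        (((hasDerivAt_id (0:ℝ)).const_mul (2:ℝ)).mul_const N).const_add (2 * W)
    have h3 := (h1.mul (hqd 0)).sub (((hpd 0).pow 2).mul h2)
    exact h3.congr_deriv (by simp only [Pi.pow_apply, Nat.cast_ofNat, pow_one]; ring)
  have hden : HasDerivAt (fun s : ℝ => (B + 2 * s * W + s ^ 2 * N) ^ 2)
      (2 * B * (2 * W)) 0 := by
    have := (hqd 0).pow 2
    exact this.congr_deriv (by simp only [Pi.pow_apply, Nat.cast_ofNat, pow_one]; ring)
  have hB2 : ((fun s : ℝ => (B + 2 * s * W + s ^ 2 * N) ^ 2) 0) ≠ 0 := by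
    simpa using pow_ne_zero 2 hB0
  have hfinal := (hnum.div hden (by simpa using hB2))
  refine hfinal.deriv.trans ?_
  -- algebraic identity
  have hc : ⟪v, u⟫ = U := by rw [real_inner_comm]
  have hv2 : ⟪v, v⟫ = B := by rw [real_inner_self_eq_norm_sq]
  have hw2 : ⟪w, w⟫ = N := by rw [real_inner_self_eq_norm_sq]
  have hwv : ⟪w, v⟫ = W := by rw [real_inner_comm]
  have e1 : ⟪u - (U / B) • v, w - (W / B) • v⟫ = X - U * W / B := by
    simp only [inner_sub_left, inner_sub_right, real_inner_smul_left,
      real_inner_smul_right, hc, hv2, ← hU, ← hX, ← hW]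
    field_simp
    try ring
  have e2 : ‖w - (W / B) • v‖ ^ 2 = N - W ^ 2 / B := by
    rw [← real_inner_self_eq_norm_sq]
    simp only [inner_sub_left, inner_sub_right, real_inner_smul_left,
      real_inner_smul_right, hc, hv2, hw2, hwv, ← hW]
    field_simp
    try ring
  have e3 : ‖(U / B) • v‖ ^ 2 = U ^ 2 / B := by
    rw [norm_smul, mul_pow, Real.norm_eq_abs, sq_abs, ← hB]
    field_simp
    try ring
  have e4 : ⟪(U / B) • v, (W / B) • v⟫ = U * W / B := by
    simp only [real_inner_smul_left, real_inner_smul_right, hv2]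
    field_simp
    try ring
  rw [e1, e2, e3, e4]
  field_simp [hB0]
  ring
end

section
/- Let A(z) = B(z) = −√(1+z²), and define α(z) = (z²·A''(z) + 6(A(z) − B(z)) − 4z(A'(z) − B'(z)))/z², β(z) = (z·A'(z) − 2(A(z) − B(z)))/z², γ(z) = B''(z), δ(z) = B'(z)/z. Then for every z > 0: β(z) < 0, γ(z) < 0, δ(z) < 0, and α(z) + δ(z) < 2√(β(z)·γ(z)). -/
/-- `α(z) = (z² A''(z) + 6(A(z) - B(z)) - 4z(A'(z) - B'(z)))/z²`. -/
noncomputable def mtwAlpha (A B : ℝ → ℝ) (z : ℝ) : ℝ :=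
  (z ^ 2 * deriv (deriv A) z + 6 * (A z - B z) -
    4 * z * (deriv A z - deriv B z)) / z ^ 2

/-- `β(z) = (z A'(z) - 2(A(z) - B(z)))/z²`. -/
noncomputable def mtwBeta (A B : ℝ → ℝ) (z : ℝ) : ℝ :=
  (z * deriv A z - 2 * (A z - B z)) / z ^ 2

/-- `γ(z) = B''(z)`. -/
noncomputable def mtwGamma (B : ℝ → ℝ) (z : ℝ) : ℝ :=
  deriv (deriv B) z

/-- `δ(z) = B'(z)/z`. -/
noncomputable def mtwDelta (B : ℝ → ℝ) (z : ℝ) : ℝ :=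
  deriv B z / z

lemma one_add_sq_pos (y : ℝ) : 0 < 1 + y ^ 2 := by positivity

lemma sqrt_pos' (y : ℝ) : 0 < Real.sqrt (1 + y ^ 2) :=
  Real.sqrt_pos.mpr (one_add_sq_pos y)

lemma sq_sqrt' (y : ℝ) : Real.sqrt (1 + y ^ 2) ^ 2 = 1 + y ^ 2 :=
  Real.sq_sqrt (one_add_sq_pos y).le

lemma hd1 (y : ℝ) :
    HasDerivAt (fun x => -Real.sqrt (1 + x ^ 2)) (-(y / Real.sqrt (1 + y ^ 2))) y := by
  have h1 : HasDerivAt (fun x : ℝ => 1 + x ^ 2) (2 * y) y := by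
    simpa using (hasDerivAt_pow 2 y).const_add 1
  have h2 := (Real.hasDerivAt_sqrt (one_add_sq_pos y).ne').comp y h1
  have : (1 / (2 * Real.sqrt (1 + y ^ 2))) * (2 * y) = y / Real.sqrt (1 + y ^ 2) := by
    field_simp
  rw [this] at h2
  exact h2.neg

lemma deriv1 : deriv (fun x => -Real.sqrt (1 + x ^ 2))
    = fun y => -(y / Real.sqrt (1 + y ^ 2)) := by
  funext y; exact (hd1 y).deriv

lemma hd2 (y : ℝ) :
    HasDerivAt (fun x => -(x / Real.sqrt (1 + x ^ 2)))
      (-(1 / Real.sqrt (1 + y ^ 2) ^ 3)) y := by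
  have hs := sqrt_pos' y
  have h1 : HasDerivAt (fun x : ℝ => Real.sqrt (1 + x ^ 2)) (y / Real.sqrt (1 + y ^ 2)) y := by
    have := (hd1 y).neg; simpa [Pi.neg_def] using this
  have h2 := (hasDerivAt_id y).div h1 hs.ne'
  have heq : (1 * Real.sqrt (1 + y ^ 2) - y * (y / Real.sqrt (1 + y ^ 2))) /
      Real.sqrt (1 + y ^ 2) ^ 2 = 1 / Real.sqrt (1 + y ^ 2) ^ 3 := by
    rw [div_eq_div_iff (by positivity) (by positivity)]
    have h := sq_sqrt' y
    field_simp
    nlinarith [sq_sqrt' y, hs]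
  simp only [id] at h2
  rw [heq] at h2
  exact h2.neg

lemma deriv2 : deriv (deriv (fun x => -Real.sqrt (1 + x ^ 2)))
    = fun y => -(1 / Real.sqrt (1 + y ^ 2) ^ 3) := by
  rw [deriv1]; funext y; exact (hd2 y).deriv

lemma deriv2' (y : ℝ) : deriv (fun x => -(x / Real.sqrt (1 + x ^ 2)))
    = fun y => -(1 / Real.sqrt (1 + y ^ 2) ^ 3) := by
  funext y; exact (hd2 y).deriv

/-- For `A = B = -√(1+z²)` (the functions associated to the cost `-cosh∘d`
on a space form of curvature `-1`), the quantities `β, γ, δ` are strictly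
negative and `α + δ < 2√(βγ)` for all `z > 0`. -/
theorem stmt_10 :
    ∀ z : ℝ, 0 < z →
      mtwBeta (fun y => -Real.sqrt (1 + y ^ 2)) (fun y => -Real.sqrt (1 + y ^ 2)) z < 0 ∧
      mtwGamma (fun y => -Real.sqrt (1 + y ^ 2)) z < 0 ∧
      mtwDelta (fun y => -Real.sqrt (1 + y ^ 2)) z < 0 ∧
      mtwAlpha (fun y => -Real.sqrt (1 + y ^ 2)) (fun y => -Real.sqrt (1 + y ^ 2)) z +
          mtwDelta (fun y => -Real.sqrt (1 + y ^ 2)) z <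
        2 * Real.sqrt
          (mtwBeta (fun y => -Real.sqrt (1 + y ^ 2)) (fun y => -Real.sqrt (1 + y ^ 2)) z *
            mtwGamma (fun y => -Real.sqrt (1 + y ^ 2)) z) := by
  intro z hz
  have hs := sqrt_pos' z
  simp only [mtwBeta, mtwGamma, mtwDelta, mtwAlpha, deriv1, deriv2' 0, sub_self]
  refine ⟨?_, ?_, ?_, ?_⟩
  · rw [div_neg_iff]; right
    constructor
    · nlinarith [mul_pos hz (div_pos hz hs)]
    · positivity
  · have : (0:ℝ) < 1 / Real.sqrt (1 + z ^ 2) ^ 3 := by positivity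
    linarith
  · rw [div_neg_iff]; right
    refine ⟨?_, hz⟩
    have : (0:ℝ) < z / Real.sqrt (1 + z ^ 2) := by positivity
    linarith
  · have hlhs : (z ^ 2 * -(1 / Real.sqrt (1 + z ^ 2) ^ 3) + 6 * 0 - 4 * z * 0) / z ^ 2 +
        -(z / Real.sqrt (1 + z ^ 2)) / z < 0 := by
      have h1 : (0:ℝ) < z ^ 2 * (1 / Real.sqrt (1 + z ^ 2) ^ 3) / z ^ 2 := by positivity
      have h2 : (0:ℝ) < (z / Real.sqrt (1 + z ^ 2)) / z := by positivity
      have e1 : (z ^ 2 * -(1 / Real.sqrt (1 + z ^ 2) ^ 3) + 6 * 0 - 4 * z * 0) / z ^ 2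
          = -(z ^ 2 * (1 / Real.sqrt (1 + z ^ 2) ^ 3) / z ^ 2) := by ring
      rw [e1]
      linarith [neg_div z (z / Real.sqrt (1 + z ^ 2))]
    calc _ < (0:ℝ) := hlhs
      _ ≤ _ := by positivity
end

section
/- Let A(z) = −(1−z²)/2 and B(z) = −(1+z²)/2, and define α(z) = (z²·A''(z) + 6(A(z) − B(z)) − 4z(A'(z) − B'(z)))/z², β(z) = (z·A'(z) − 2(A(z) − B(z)))/z², γ(z) = B''(z), δ(z) = B'(z)/z. Then for every z > 0: α(z) = β(z) = γ(z) = δ(z) = −1, and in particular α(z) + δ(z) < 2√(β(z)·γ(z)). -/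
lemma derivA : deriv (fun y : ℝ => -(1 - y ^ 2) / 2) = fun y => y := by
  funext y
  have h : HasDerivAt (fun y : ℝ => -(1 - y ^ 2) / 2) y y := by
    have : HasDerivAt (fun y : ℝ => -(1 - y ^ 2) / 2) _ y := (((hasDerivAt_pow 2 y).const_sub 1).neg).div_const 2
    convert this using 1
    norm_num
    try ring
  exact h.deriv

lemma derivB : deriv (fun y : ℝ => -(1 + y ^ 2) / 2) = fun y => -y := by
  funext y
  have h : HasDerivAt (fun y : ℝ => -(1 + y ^ 2) / 2) (-y) y := by
    have : HasDerivAt (fun y : ℝ => -(1 + y ^ 2) / 2) _ y := (((hasDerivAt_pow 2 y).const_add 1).neg).div_const 2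
    convert this using 1
    norm_num
    try ring
  exact h.deriv

/-- For `A(z) = -(1-z²)/2` and `B(z) = -(1+z²)/2` (the functions associated
to the cost `-log∘(1+cosh)∘d` on a space form of curvature `-1`), the
quantities `α, β, γ, δ` are all equal to `-1` for `z > 0`, and in particular
`α + δ < 2√(βγ)`. -/
theorem stmt_12 :
    ∀ z : ℝ, 0 < z →
      mtwAlpha (fun y => -(1 - y ^ 2) / 2) (fun y => -(1 + y ^ 2) / 2) z = -1 ∧
      mtwBeta (fun y => -(1 - y ^ 2) / 2) (fun y => -(1 + y ^ 2) / 2) z = -1 ∧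
      mtwGamma (fun y => -(1 + y ^ 2) / 2) z = -1 ∧
      mtwDelta (fun y => -(1 + y ^ 2) / 2) z = -1 ∧
      mtwAlpha (fun y => -(1 - y ^ 2) / 2) (fun y => -(1 + y ^ 2) / 2) z +
          mtwDelta (fun y => -(1 + y ^ 2) / 2) z <
        2 * Real.sqrt
          (mtwBeta (fun y => -(1 - y ^ 2) / 2) (fun y => -(1 + y ^ 2) / 2) z *
            mtwGamma (fun y => -(1 + y ^ 2) / 2) z) := by
  intro z hz
  have hz2 : z ^ 2 ≠ 0 := pow_ne_zero _ hz.ne'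
  have hA : mtwAlpha (fun y => -(1 - y ^ 2) / 2) (fun y => -(1 + y ^ 2) / 2) z = -1 := by
    unfold mtwAlpha
    rw [derivA, derivB]
    simp
    field_simp
    ring
  have hB : mtwBeta (fun y => -(1 - y ^ 2) / 2) (fun y => -(1 + y ^ 2) / 2) z = -1 := by
    unfold mtwBeta
    rw [derivA]
    field_simp
    ring
  have hG : mtwGamma (fun y => -(1 + y ^ 2) / 2) z = -1 := by
    unfold mtwGamma
    rw [derivB]
    simp
  have hD : mtwDelta (fun y => -(1 + y ^ 2) / 2) z = -1 := by
    unfold mtwDelta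
    rw [derivB]
    field_simp
  refine ⟨hA, hB, hG, hD, ?_⟩
  rw [hA, hB, hG, hD]
  norm_num [Real.sqrt_one]
end
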